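/- arXiv:1304.0701 — 2 statements merged into one kernel-verified Lean document; each statement's English description precedes it below -/
import Mathlib

section
/- (Barrier closeness.) Fix j, δ > 0 small enough, and let φ_t^{δ,−} and φ_t^{δ,+} be the delta interface evolutions defined by: φ_0^{δ,−} = φ, φ_0^{δ,+} = max{φ, V_{(0,δj)}}, and for n ≥ 0: φ_t^{δ,±} = G_{t−nδ} φ_{nδ}^{δ,±} for t ∈ [nδ,(n+1)δ), φ_{nδ}^{δ,−} = max{φ_{nδ−}^{δ,−}, V_{(0,nδj)}}, φ_{nδ}^{δ,+} = max{φ_{nδ−}^{δ,+}, V_{(0,(n+1)δj)}}. Then for every k ≥ 0, sup_{r∈ℝ} |φ_{kδ}^{δ,+}(r) − φ_{kδ}^{δ,−}(r)| ≤ jδ. -/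
open MeasureTheory

/-- The Gaussian heat kernel. -/
noncomputable def gaussK (t r r' : ℝ) : ℝ :=
  Real.exp (-(r - r') ^ 2 / (2 * t)) / Real.sqrt (2 * Real.pi * t)

/-- The heat semigroup applied to an interface. -/
noncomputable def heatEvol (t : ℝ) (f : ℝ → ℝ) (r : ℝ) : ℝ :=
  ∫ r', gaussK t r r' * f r'

/-- The delta⁻ interface evolution sampled at times `kδ`: start from `φ`, evolve
by the heat semigroup for time `δ`, then take the maximum with the rising cone
`|r| + kjδ`. -/
noncomputable def deltaMinus (j δ : ℝ) (φ : ℝ → ℝ) : ℕ → ℝ → ℝ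
  | 0 => φ
  | k + 1 => fun r =>
      max (heatEvol δ (deltaMinus j δ φ k) r) (|r| + ((k : ℝ) + 1) * j * δ)

/-- The delta⁺ interface evolution sampled at times `kδ`: as delta⁻ but the cone
update is anticipated by one step. -/
noncomputable def deltaPlus (j δ : ℝ) (φ : ℝ → ℝ) : ℕ → ℝ → ℝ
  | 0 => fun r => max (φ r) (|r| + j * δ)
  | k + 1 => fun r =>
      max (heatEvol δ (deltaPlus j δ φ k) r) (|r| + ((k : ℝ) + 2) * j * δ)

lemma gaussK_eq (t r r' : ℝ) :
    gaussK t r r' = Real.exp (-(1/(2*t)) * (r' - r) ^ 2) / Real.sqrt (2 * Real.pi * t) := by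
  unfold gaussK
  rw [show -(r - r') ^ 2 / (2*t) = -(1/(2*t)) * (r' - r) ^ 2 by ring]

lemma gaussK_cont (t : ℝ) : Continuous fun p : ℝ × ℝ => gaussK t p.1 p.2 := by
  unfold gaussK
  exact (Real.continuous_exp.comp (by fun_prop)).div_const _

lemma gaussK_nonneg (t r r' : ℝ) : 0 ≤ gaussK t r r' := by
  unfold gaussK
  positivity

lemma gaussK_integrable {t : ℝ} (ht : 0 < t) (r : ℝ) :
    Integrable (fun r' => gaussK t r r') := by
  have h : Integrable (fun x : ℝ => Real.exp (-(1/(2*t)) * x ^ 2)) :=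
    integrable_exp_neg_mul_sq (by positivity)
  have h2 := (h.comp_sub_right r).div_const (Real.sqrt (2 * Real.pi * t))
  simpa [gaussK_eq] using h2

lemma gaussK_integral {t : ℝ} (ht : 0 < t) (r : ℝ) :
    ∫ r', gaussK t r r' = 1 := by
  have h := integral_gaussian (1/(2*t))
  calc ∫ r', gaussK t r r'
      = ∫ r', Real.exp (-(1/(2*t)) * (r' - r) ^ 2) / Real.sqrt (2 * Real.pi * t) := by
        simp only [gaussK_eq]
    _ = (∫ r', Real.exp (-(1/(2*t)) * (r' - r) ^ 2)) / Real.sqrt (2 * Real.pi * t) :=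
        integral_div _ _
    _ = (∫ x, Real.exp (-(1/(2*t)) * x ^ 2)) / Real.sqrt (2 * Real.pi * t) := by
        rw [integral_sub_right_eq_self (fun x => Real.exp (-(1/(2*t)) * x ^ 2)) r]
    _ = 1 := by
        rw [h, show Real.pi / (1/(2*t)) = 2 * Real.pi * t by field_simp]
        exact div_self (by positivity)

lemma heatEvol_measurable {t : ℝ} {f : ℝ → ℝ} (hf : Measurable f) :
    Measurable (heatEvol t f) := by
  have hm : StronglyMeasurable fun p : ℝ × ℝ => gaussK t p.1 p.2 * f p.2 :=
    ((gaussK_cont t).measurable.mul (hf.comp measurable_snd)).stronglyMeasurable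
  exact hm.integral_prod_right'.measurable

lemma deltaMinus_measurable (j δ : ℝ) {φ : ℝ → ℝ} (hφ : Measurable φ) :
    ∀ k, Measurable (deltaMinus j δ φ k)
  | 0 => hφ
  | k + 1 => by
    simp only [deltaMinus]
    exact (heatEvol_measurable (deltaMinus_measurable j δ hφ k)).max
      ((continuous_abs.measurable).add_const _)

lemma deltaPlus_measurable (j δ : ℝ) {φ : ℝ → ℝ} (hφ : Measurable φ) :
    ∀ k, Measurable (deltaPlus j δ φ k)
  | 0 => hφ.max ((continuous_abs.measurable).add_const _)
  | k + 1 => by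
    simp only [deltaPlus]
    exact (heatEvol_measurable (deltaPlus_measurable j δ hφ k)).max
      ((continuous_abs.measurable).add_const _)

set_option maxHeartbeats 1000000 in
lemma heat_contract {δ c : ℝ} (hδ : 0 < δ) (hc : 0 ≤ c) {f g : ℝ → ℝ}
    (hf : Measurable f) (hg : Measurable g)
    (hfg : ∀ r, |f r - g r| ≤ c) (r : ℝ) :
    |heatEvol δ f r - heatEvol δ g r| ≤ c := by
  have hKint := gaussK_integrable hδ r
  have hKm : Measurable fun r' => gaussK δ r r' := by
    have := gaussK_cont δ
    fun_prop
  have hD : Integrable (fun r' => gaussK δ r r' * (f r' - g r')) := by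
    apply Integrable.mono' (hKint.const_mul c)
      ((hKm.mul (hf.sub hg)).aestronglyMeasurable)
    filter_upwards with r'
    simp only [Real.norm_eq_abs, Pi.mul_apply, Pi.sub_apply]
    rw [abs_mul, abs_of_nonneg (gaussK_nonneg δ r r')]
    calc gaussK δ r r' * |f r' - g r'| ≤ gaussK δ r r' * c :=
          mul_le_mul_of_nonneg_left (hfg r') (gaussK_nonneg δ r r')
      _ = c * gaussK δ r r' := mul_comm _ _
  by_cases hfI : Integrable (fun r' => gaussK δ r r' * f r')
  · have hgI : Integrable (fun r' => gaussK δ r r' * g r') := by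
      have h := hfI.sub hD
      have : (fun r' => gaussK δ r r' * g r')
          = fun r' => gaussK δ r r' * f r' - gaussK δ r r' * (f r' - g r') := by
        funext r'; ring
      rw [this]; exact h
    have heq : heatEvol δ f r - heatEvol δ g r = ∫ r', gaussK δ r r' * (f r' - g r') := by
      unfold heatEvol
      rw [← integral_sub hfI hgI]
      congr 1; funext r'; ring
    rw [heq]
    calc |∫ r', gaussK δ r r' * (f r' - g r')|
        ≤ ∫ r', |gaussK δ r r' * (f r' - g r')| := by
          simpa only [Real.norm_eq_abs] using
            norm_integral_le_integral_norm (μ := volume) (fun r' => gaussK δ r r' * (f r' - g r'))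
      _ ≤ ∫ r', c * gaussK δ r r' := by
          apply integral_mono hD.abs (hKint.const_mul c)
          intro r'
          simp only
          rw [abs_mul, abs_of_nonneg (gaussK_nonneg δ r r'), mul_comm c]
          exact mul_le_mul_of_nonneg_left (hfg r') (gaussK_nonneg δ r r')
      _ = c * ∫ r', gaussK δ r r' := integral_const_mul _ _
      _ = c := by rw [gaussK_integral hδ r, mul_one]
  · have hgI : ¬ Integrable (fun r' => gaussK δ r r' * g r') := by
      intro h
      apply hfI
      have h2 := h.add hD
      have : (fun r' => gaussK δ r r' * f r')
          = fun r' => gaussK δ r r' * g r' + gaussK δ r r' * (f r' - g r') := by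
        funext r'; ring
      rw [this]; exact h2
    unfold heatEvol
    rw [integral_undef hfI, integral_undef hgI]
    simpa using hc

/-- (Barrier closeness.) The upper and lower delta interface evolutions started
from the same initial interface `φ` stay within `jδ` of each other at all times
`kδ`. -/
theorem delta_barriers_close (j δ : ℝ) (hj : 0 < j) (hδ : 0 < δ)
    (φ : ℝ → ℝ) (hlip : LipschitzWith 1 φ) (hge : ∀ r : ℝ, |r| ≤ φ r)
    (hcone : ∃ M : ℝ, ∀ r : ℝ, M ≤ |r| → φ r = |r|) :
    ∀ (k : ℕ) (r : ℝ), |deltaPlus j δ φ k r - deltaMinus j δ φ k r| ≤ j * δ := by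
  have hφm : Measurable φ := hlip.continuous.measurable
  intro k
  induction k with
  | zero =>
    intro r
    simp only [deltaPlus, deltaMinus]
    have h1 : φ r ≤ max (φ r) (|r| + j * δ) := le_max_left _ _
    have h2 : max (φ r) (|r| + j * δ) ≤ φ r + j * δ := by
      apply max_le (le_add_of_nonneg_right (by positivity))
      linarith [hge r]
    rw [abs_le]
    constructor <;> linarith
  | succ k ih =>
    intro r
    simp only [deltaPlus, deltaMinus]
    have hA : |heatEvol δ (deltaPlus j δ φ k) r - heatEvol δ (deltaMinus j δ φ k) r| ≤ j * δ :=
      heat_contract hδ (by positivity)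
        (deltaPlus_measurable j δ hφm k) (deltaMinus_measurable j δ hφm k) ih r
    have hmax := abs_max_sub_max_le_max (heatEvol δ (deltaPlus j δ φ k) r)
      (|r| + ((k : ℝ) + 2) * j * δ)
      (heatEvol δ (deltaMinus j δ φ k) r)
      (|r| + ((k : ℝ) + 1) * j * δ)
    have hc : |(|r| + ((k : ℝ) + 2) * j * δ) - (|r| + ((k : ℝ) + 1) * j * δ)| = j * δ := by
      rw [show (|r| + ((k : ℝ) + 2) * j * δ) - (|r| + ((k : ℝ) + 1) * j * δ) = j * δ by ring,
        abs_of_nonneg (by positivity)]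
    refine le_trans hmax ?_
    rw [hc]
    exact max_le hA le_rfl
end

section
/- (Time regularity of the lower barrier.) For the delta− interface evolution φ_t^{δ,−} started from a 1-Lipschitz φ ≥ |r| equal to |r| outside a compact: G_s φ_t^{δ,−} ≤ φ_{t+s}^{δ,−} ≤ G_s φ_t^{δ,−} + j(s + δ) for all t ≥ 0, s > 0. Consequently |φ_{t+s}^{δ,−}(r) − φ_t^{δ,−}(r)| ≤ c√s + j(s + δ) for a constant c depending only on the Lipschitz constant, uniformly in r, t and δ ≤ 1. -/
open MeasureTheory
open scoped Classical

/-- The delta⁻ interface evolution in continuous time: at the grid times `kδ` it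
is the discrete evolution, and inside `(kδ,(k+1)δ)` it is the heat evolution of
the profile at the last grid time. -/

noncomputable def deltaMinusT (j δ : ℝ) (φ : ℝ → ℝ) (t : ℝ) : ℝ → ℝ :=
  if h : ∃ k : ℕ, t = (k : ℝ) * δ then deltaMinus j δ φ h.choose
  else heatEvol (t - ⌊t / δ⌋ * δ) (deltaMinus j δ φ (⌊t / δ⌋).toNat)

namespace DMaux
open Real


lemma sqrt2pit_pos {t : ℝ} (ht : 0 < t) : 0 < Real.sqrt (2 * Real.pi * t) :=
  Real.sqrt_pos.2 (by positivity)

lemma gaussK_nonneg (t r x : ℝ) : 0 ≤ gaussK t r x := by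
  unfold gaussK; positivity

lemma gaussK_form (t r x : ℝ) :
    gaussK t r x = Real.exp (-(1/(2*t)) * (x - r)^2) / Real.sqrt (2 * Real.pi * t) := by
  unfold gaussK
  rw [show -(r - x) ^ 2 / (2 * t) = -(1/(2*t)) * (x - r)^2 by ring]

lemma gaussK_shift (t r x : ℝ) : gaussK t r x = gaussK t 0 (x - r) := by
  rw [gaussK_form, gaussK_form]; ring_nf

lemma gaussK_center (t a r x : ℝ) : gaussK t (a + r) x = gaussK t r (x - a) := by
  rw [gaussK_form, gaussK_form]; ring_nf

lemma continuous_gaussK (t r : ℝ) : Continuous (gaussK t r) := by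
  unfold gaussK; fun_prop

lemma continuous_gaussK2 (t : ℝ) : Continuous (fun p : ℝ × ℝ => gaussK t p.1 p.2) := by
  unfold gaussK; fun_prop

lemma integrable_gaussK {t : ℝ} (ht : 0 < t) (r : ℝ) : Integrable (gaussK t r) := by
  have hb : 0 < 1/(2*t) := by positivity
  have h := ((integrable_exp_neg_mul_sq hb).comp_sub_right r).div_const
    (Real.sqrt (2 * Real.pi * t))
  exact h.congr (Filter.Eventually.of_forall fun x => by simp only [gaussK_form])

lemma integrable_gaussK_mul_sub {t : ℝ} (ht : 0 < t) (r : ℝ) :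
    Integrable (fun x => gaussK t r x * (x - r)) := by
  have hb : 0 < 1/(2*t) := by positivity
  have h := (((integrable_mul_exp_neg_mul_sq hb).comp_sub_right r).div_const
    (Real.sqrt (2 * Real.pi * t)))
  exact h.congr (Filter.Eventually.of_forall fun x => by simp only [gaussK_form]; ring)

lemma integrable_gaussK_mul_abs {t : ℝ} (ht : 0 < t) (r : ℝ) :
    Integrable (fun x => gaussK t r x * |x - r|) := by
  have h := (integrable_gaussK_mul_sub ht r).abs
  exact h.congr (Filter.Eventually.of_forall fun x => by
    simp only [abs_mul, abs_of_nonneg (gaussK_nonneg t r x)])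

lemma integral_gaussK {t : ℝ} (ht : 0 < t) (r : ℝ) : ∫ x, gaussK t r x = 1 := by
  have hb : 0 < 1/(2*t) := by positivity
  have h1 : ∫ x, gaussK t r x
      = (∫ x, Real.exp (-(1/(2*t)) * (x - r)^2)) / Real.sqrt (2 * Real.pi * t) := by
    rw [← integral_div]
    exact integral_congr_ae (Filter.Eventually.of_forall fun x => by rw [gaussK_form])
  have h2 : (∫ x, Real.exp (-(1/(2*t)) * (x - r)^2))
      = ∫ x, Real.exp (-(1/(2*t)) * x^2) := by
    have := integral_sub_right_eq_self (μ := volume) (fun x => Real.exp (-(1/(2*t)) * x^2)) r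
    simpa using this
  rw [h1, h2, integral_gaussian]
  rw [show Real.pi / (1/(2*t)) = 2 * Real.pi * t by field_simp]
  field_simp [(sqrt2pit_pos ht).ne']
-- moment lemmas
lemma integral_Ioi_mul_exp {b : ℝ} (hb : 0 < b) :
    ∫ x in Set.Ioi (0:ℝ), x * Real.exp (-b * x^2) = (2*b)⁻¹ := by
  have A : ∀ x : ℝ, HasDerivAt (fun y => -(2*b)⁻¹ * Real.exp (-b * y^2))
      (x * Real.exp (-b * x^2)) x := by
    intro x
    convert (((hasDerivAt_pow 2 x).const_mul (-b)).exp.const_mul (-(2*b)⁻¹)) using 1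
    · rfl
    · rfl
    field_simp
    ring
  have B : Filter.Tendsto (fun y : ℝ => -(2*b)⁻¹ * Real.exp (-b * y^2))
      Filter.atTop (nhds (-(2*b)⁻¹ * 0)) := by
    apply Filter.Tendsto.const_mul
    have : Filter.Tendsto (fun y : ℝ => -b * y^2) Filter.atTop Filter.atBot := by
      apply Filter.Tendsto.const_mul_atTop_of_neg (by linarith)
      exact Filter.tendsto_pow_atTop (by norm_num)
    exact Real.tendsto_exp_atBot.comp this
  have := integral_Ioi_of_hasDerivAt_of_tendsto' (a := 0) (f' := fun x => x * Real.exp (-b * x^2))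
    (fun x _ => A x) ((integrable_mul_exp_neg_mul_sq hb).integrableOn) B
  rw [this]
  simp [Real.exp_zero]

lemma integral_abs_mul_exp {b : ℝ} (hb : 0 < b) :
    ∫ x : ℝ, |x| * Real.exp (-b * x^2) = b⁻¹ := by
  have h : ∀ x : ℝ, |x| * Real.exp (-b * x^2) = |x| * Real.exp (-b * |x|^2) := by
    intro x; rw [sq_abs]
  rw [integral_congr_ae (Filter.Eventually.of_forall h)]
  rw [show (fun x : ℝ => |x| * Real.exp (-b * |x|^2)) = fun x => (fun y => y * Real.exp (-b*y^2)) |x| from rfl]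
  rw [integral_comp_abs (f := fun y => y * Real.exp (-b*y^2))]
  rw [integral_Ioi_mul_exp hb]
  rw [mul_inv]
  ring

lemma integral_gaussK_absmoment {t : ℝ} (ht : 0 < t) (r : ℝ) :
    ∫ x, gaussK t r x * |x - r| ≤ Real.sqrt t := by
  have hb : 0 < 1/(2*t) := by positivity
  have h1 : ∫ x, gaussK t r x * |x - r|
      = (∫ x, |x| * Real.exp (-(1/(2*t)) * x^2)) / Real.sqrt (2 * Real.pi * t) := by
    rw [← integral_div]
    rw [← integral_sub_right_eq_self (μ := volume)
      (fun x => |x| * Real.exp (-(1/(2*t)) * x^2) / Real.sqrt (2 * Real.pi * t)) r]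
    exact integral_congr_ae (Filter.Eventually.of_forall fun x => by
      simp only [gaussK_form]; ring)
  rw [h1, integral_abs_mul_exp hb]
  rw [show (1/(2*t) : ℝ)⁻¹ = 2*t by field_simp]
  -- 2t / √(2πt) ≤ √t
  rw [div_le_iff₀ (sqrt2pit_pos ht)]
  have h2 : Real.sqrt t * Real.sqrt (2 * Real.pi * t) = Real.sqrt (2 * Real.pi) * t := by
    rw [← Real.sqrt_mul (by positivity), show t * (2 * Real.pi * t) = (2*Real.pi) * t^2 by ring,
      Real.sqrt_mul (by positivity), Real.sqrt_sq ht.le]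
  rw [h2]
  have h3 : (2:ℝ) ≤ Real.sqrt (2 * Real.pi) := by
    have h4 : (2:ℝ) = Real.sqrt 4 := by
      rw [show (4:ℝ) = 2^2 by norm_num, Real.sqrt_sq (by norm_num : (0:ℝ) ≤ 2)]
    rw [h4]
    exact Real.sqrt_le_sqrt (by nlinarith [Real.pi_gt_three])
  have h4 : 0 ≤ Real.sqrt (2*Real.pi) := Real.sqrt_nonneg _
  nlinarith
-- master integrability
lemma integrable_gaussK_mul {t : ℝ} (ht : 0 < t) (r : ℝ) {f : ℝ → ℝ} (hf : Continuous f)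
    {A B : ℝ} (hB : 0 ≤ B) (hbd : ∀ x, |f x| ≤ A + B * |x|) :
    Integrable (fun x => gaussK t r x * f x) := by
  have hmaj : Integrable (fun x => gaussK t r x * (A + B * |r|) + B * (gaussK t r x * |x - r|)) :=
    ((integrable_gaussK ht r).mul_const _).add ((integrable_gaussK_mul_abs ht r).const_mul B)
  refine Integrable.mono' hmaj ((continuous_gaussK t r).mul hf).aestronglyMeasurable
    (Filter.Eventually.of_forall fun x => ?_)
  have h1 : |gaussK t r x * f x| = gaussK t r x * |f x| := by
    rw [abs_mul, abs_of_nonneg (gaussK_nonneg t r x)]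
  rw [Real.norm_eq_abs, h1]
  have h2 : |f x| ≤ (A + B * |r|) + B * |x - r| := by
    have := hbd x
    have h3 : |x| ≤ |r| + |x - r| := by
      have := abs_add_le r (x - r); simpa using this
    nlinarith
  nlinarith [mul_le_mul_of_nonneg_left h2 (gaussK_nonneg t r x), gaussK_nonneg t r x]

lemma integral_abs_gaussK_mul_le {t : ℝ} (ht : 0 < t) (r : ℝ) {f : ℝ → ℝ} (hf : Continuous f)
    {A B : ℝ} (hB : 0 ≤ B) (hbd : ∀ x, |f x| ≤ A + B * |x|) :
    ∫ x, |gaussK t r x * f x| ≤ A + B * |r| + B * Real.sqrt t := by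
  have hint := integrable_gaussK_mul ht r hf hB hbd
  have hmaj : Integrable (fun x => gaussK t r x * (A + B * |r|) + B * (gaussK t r x * |x - r|)) :=
    ((integrable_gaussK ht r).mul_const _).add ((integrable_gaussK_mul_abs ht r).const_mul B)
  have h1 : ∫ x, |gaussK t r x * f x|
      ≤ ∫ x, (gaussK t r x * (A + B * |r|) + B * (gaussK t r x * |x - r|)) := by
    refine integral_mono hint.abs hmaj fun x => ?_
    have h2 : |x| ≤ |r| + |x - r| := by
      have := abs_add_le r (x - r); simpa using this
    have h3 := hbd x
    have h4 := gaussK_nonneg t r x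
    rw [abs_mul, abs_of_nonneg h4]
    nlinarith [mul_le_mul_of_nonneg_left h3 h4,
      mul_le_mul_of_nonneg_left (mul_le_mul_of_nonneg_left h2 hB) h4]
  rw [integral_add ((integrable_gaussK ht r).mul_const _)
    ((integrable_gaussK_mul_abs ht r).const_mul B), integral_mul_const, integral_const_mul,
    integral_gaussK ht r] at h1
  have h5 := integral_gaussK_absmoment ht r
  nlinarith

-- representation
lemma heatEvol_rep (t : ℝ) (f : ℝ → ℝ) (r : ℝ) :
    heatEvol t f r = ∫ x, gaussK t 0 x * f (r + x) := by
  unfold heatEvol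
  have h1 : ∀ r', gaussK t r r' * f r' = gaussK t 0 (r' - r) * f r' := fun r' => by
    rw [← gaussK_shift]
  rw [integral_congr_ae (Filter.Eventually.of_forall h1)]
  rw [← integral_add_right_eq_self (μ := volume) (fun z => gaussK t 0 (z - r) * f z) r]
  exact integral_congr_ae (Filter.Eventually.of_forall fun x => by
    simp [add_comm])
lemma abs_int_le (f : ℝ → ℝ) : |∫ x, f x| ≤ ∫ x, |f x| := by
  simpa [Real.norm_eq_abs] using norm_integral_le_integral_norm (μ := volume) f

lemma gaussK_even (t u : ℝ) : gaussK t 0 (-u) = gaussK t 0 u := by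
  rw [gaussK_form, gaussK_form]; ring_nf

lemma integral_gaussK_mul_sub_zero {t : ℝ} (ht : 0 < t) (r : ℝ) :
    ∫ x, gaussK t r x * (x - r) = 0 := by
  have h1 : ∫ x, gaussK t r x * (x - r) = ∫ u, gaussK t 0 u * u := by
    calc ∫ x, gaussK t r x * (x - r) = ∫ x, (fun u => gaussK t 0 u * u) (x - r) := by
          exact integral_congr_ae (Filter.Eventually.of_forall fun x => by
            simp only [gaussK_shift t r])
      _ = ∫ u, gaussK t 0 u * u := integral_sub_right_eq_self (μ := volume) (fun u => gaussK t 0 u * u) r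
  have h2 : ∫ u, gaussK t 0 u * u = -∫ u, gaussK t 0 u * u := by
    nth_rewrite 1 [← integral_neg_eq_self (fun u => gaussK t 0 u * u) volume]
    rw [← integral_neg]
    exact integral_congr_ae (Filter.Eventually.of_forall fun u => by
      simp only [gaussK_even]; ring)
  rw [h1]; linarith

lemma heatEvol_add_const {t : ℝ} (ht : 0 < t) {f : ℝ → ℝ} (hf : Continuous f)
    {A B : ℝ} (hB : 0 ≤ B) (hbd : ∀ x, |f x| ≤ A + B * |x|) (c r : ℝ) :
    heatEvol t (fun x => f x + c) r = heatEvol t f r + c := by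
  unfold heatEvol
  have h1 : ∀ r', gaussK t r r' * (f r' + c) = gaussK t r r' * f r' + gaussK t r r' * c :=
    fun _ => by ring
  rw [integral_congr_ae (Filter.Eventually.of_forall h1),
    integral_add (integrable_gaussK_mul ht r hf hB hbd) ((integrable_gaussK ht r).mul_const c),
    integral_mul_const, integral_gaussK ht r, one_mul]

lemma heatEvol_mono {t : ℝ} (ht : 0 < t) {f g : ℝ → ℝ} (hf : Continuous f) (hg : Continuous g)
    {A B A' B' : ℝ} (hB : 0 ≤ B) (hB' : 0 ≤ B')
    (hbdf : ∀ x, |f x| ≤ A + B * |x|) (hbdg : ∀ x, |g x| ≤ A' + B' * |x|)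
    (hle : ∀ x, f x ≤ g x) (r : ℝ) : heatEvol t f r ≤ heatEvol t g r :=
  integral_mono (integrable_gaussK_mul ht r hf hB hbdf) (integrable_gaussK_mul ht r hg hB' hbdg)
    fun x => mul_le_mul_of_nonneg_left (hle x) (gaussK_nonneg t r x)

lemma abs_cone_bd (c : ℝ) (hc : 0 ≤ c) : ∀ x : ℝ, |(|x| + c)| ≤ c + 1 * |x| := fun x => by
  rw [abs_of_nonneg (by positivity)]; linarith

lemma le_heatEvol_cone {t : ℝ} (ht : 0 < t) {c : ℝ} (hc : 0 ≤ c) (r : ℝ) :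
    |r| + c ≤ heatEvol t (fun x => |x| + c) r := by
  have habs : Continuous (fun x : ℝ => |x|) := continuous_abs
  have hbd : ∀ x : ℝ, |(|x|)| ≤ 0 + 1 * |x| := fun x => by simp [abs_abs]
  have h0 : heatEvol t (fun x => |x| + c) r = heatEvol t (fun x => |x|) r + c :=
    heatEvol_add_const ht habs zero_le_one hbd c r
  rw [h0]
  have h1 : |r| ≤ heatEvol t (fun x => |x|) r := by
    unfold heatEvol
    have hx : ∫ x, gaussK t r x * x = r := by
      have h2 : ∀ x, gaussK t r x * x = gaussK t r x * (x - r) + gaussK t r x * r :=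
        fun x => by ring
      rw [integral_congr_ae (Filter.Eventually.of_forall h2),
        integral_add (integrable_gaussK_mul_sub ht r) ((integrable_gaussK ht r).mul_const r),
        integral_gaussK_mul_sub_zero ht r, integral_mul_const, integral_gaussK ht r]
      ring
    have h3 : |∫ x, gaussK t r x * x| ≤ ∫ x, |gaussK t r x * x| :=
      abs_int_le _
    have h4 : ∫ x, |gaussK t r x * x| = ∫ x, gaussK t r x * |x| :=
      integral_congr_ae (Filter.Eventually.of_forall fun x => by
        simp only [abs_mul, abs_of_nonneg (gaussK_nonneg t r x)])
    rw [hx] at h3; rw [h4] at h3; exact h3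
  linarith

lemma heatEvol_ge_cone {t : ℝ} (ht : 0 < t) {f : ℝ → ℝ} (hf : Continuous f)
    {A B : ℝ} (hB : 0 ≤ B) (hbd : ∀ x, |f x| ≤ A + B * |x|)
    {c : ℝ} (hc : 0 ≤ c) (hle : ∀ x, |x| + c ≤ f x) (r : ℝ) :
    |r| + c ≤ heatEvol t f r :=
  (le_heatEvol_cone ht hc r).trans
    (heatEvol_mono ht (by continuity) hf zero_le_one hB (fun x => by
      rw [abs_of_nonneg (by positivity)]; linarith [abs_nonneg x]) hbd hle r)

lemma lip_bound {f : ℝ → ℝ} (hlip : LipschitzWith 1 f) (a x : ℝ) :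
    |f x - f a| ≤ |x - a| := by
  have := hlip.dist_le_mul x a
  rwa [Real.dist_eq, Real.dist_eq, NNReal.coe_one, one_mul] at this

lemma heatEvol_lipschitz {t : ℝ} (ht : 0 < t) {f : ℝ → ℝ} (hlip : LipschitzWith 1 f)
    {A B : ℝ} (hB : 0 ≤ B) (hbd : ∀ x, |f x| ≤ A + B * |x|) :
    LipschitzWith 1 (heatEvol t f) := by
  have hcont := hlip.continuous
  apply LipschitzWith.of_dist_le_mul
  intro r1 r2
  rw [Real.dist_eq, Real.dist_eq, NNReal.coe_one, one_mul, heatEvol_rep, heatEvol_rep]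
  have hbd1 : ∀ a : ℝ, ∀ x : ℝ, |f (a + x)| ≤ (A + B * |a|) + B * |x| := by
    intro a x
    calc |f (a + x)| ≤ A + B * |a + x| := hbd _
      _ ≤ (A + B * |a|) + B * |x| := by
          nlinarith [abs_add_le a x, mul_le_mul_of_nonneg_left (abs_add_le a x) hB]
  have int1 : Integrable (fun x => gaussK t 0 x * f (r1 + x)) :=
    integrable_gaussK_mul ht 0 (by continuity) hB (hbd1 r1)
  have int2 : Integrable (fun x => gaussK t 0 x * f (r2 + x)) :=
    integrable_gaussK_mul ht 0 (by continuity) hB (hbd1 r2)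
  rw [← integral_sub int1 int2]
  have h3 : |∫ x, (gaussK t 0 x * f (r1 + x) - gaussK t 0 x * f (r2 + x))|
      ≤ ∫ x, |gaussK t 0 x * f (r1 + x) - gaussK t 0 x * f (r2 + x)| :=
    abs_int_le _
  refine h3.trans ?_
  have h4 : ∫ x, |gaussK t 0 x * f (r1 + x) - gaussK t 0 x * f (r2 + x)|
      ≤ ∫ x, gaussK t 0 x * |r1 - r2| := by
    refine integral_mono (int1.sub int2).abs ((integrable_gaussK ht 0).mul_const _) fun x => ?_
    rw [← mul_sub, abs_mul, abs_of_nonneg (gaussK_nonneg t 0 x)]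
    refine mul_le_mul_of_nonneg_left ?_ (gaussK_nonneg t 0 x)
    have := lip_bound hlip (r2 + x) (r1 + x)
    simpa using this
  refine h4.trans ?_
  rw [integral_mul_const, integral_gaussK ht 0, one_mul]

lemma heatEvol_sub_self {t : ℝ} (ht : 0 < t) {f : ℝ → ℝ} (hlip : LipschitzWith 1 f)
    {A B : ℝ} (hB : 0 ≤ B) (hbd : ∀ x, |f x| ≤ A + B * |x|) (r : ℝ) :
    |heatEvol t f r - f r| ≤ Real.sqrt t := by
  have hcont := hlip.continuous
  rw [heatEvol_rep]
  have hbd1 : ∀ x : ℝ, |f (r + x)| ≤ (A + B * |r|) + B * |x| := by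
    intro x
    calc |f (r + x)| ≤ A + B * |r + x| := hbd _
      _ ≤ (A + B * |r|) + B * |x| := by
          nlinarith [abs_add_le r x, mul_le_mul_of_nonneg_left (abs_add_le r x) hB]
  have int1 : Integrable (fun x => gaussK t 0 x * f (r + x)) :=
    integrable_gaussK_mul ht 0 (by continuity) hB hbd1
  have hfr : f r = ∫ x, gaussK t 0 x * f r := by
    rw [integral_mul_const, integral_gaussK ht 0, one_mul]
  nth_rewrite 1 [hfr]
  rw [← integral_sub int1 ((integrable_gaussK ht 0).mul_const _)]
  have h3 := abs_int_le
    (fun x => gaussK t 0 x * f (r + x) - gaussK t 0 x * f r)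
  refine h3.trans ?_
  have h4 : ∫ x, |gaussK t 0 x * f (r + x) - gaussK t 0 x * f r|
      ≤ ∫ x, gaussK t 0 x * |x - 0| := by
    refine integral_mono (int1.sub ((integrable_gaussK ht 0).mul_const _)).abs
      (integrable_gaussK_mul_abs ht 0) fun x => ?_
    rw [← mul_sub, abs_mul, abs_of_nonneg (gaussK_nonneg t 0 x)]
    refine mul_le_mul_of_nonneg_left ?_ (gaussK_nonneg t 0 x)
    have := lip_bound hlip r (r + x)
    simpa using this
  exact h4.trans (integral_gaussK_absmoment ht 0)
lemma exp_integral_shift {b : ℝ} (hb : 0 < b) (m : ℝ) :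
    ∫ y, Real.exp (-b * (y - m)^2) = Real.sqrt (Real.pi / b) := by
  calc ∫ y, Real.exp (-b * (y - m)^2)
      = ∫ y, Real.exp (-b * y^2) :=
        integral_sub_right_eq_self (μ := volume) (fun z => Real.exp (-b * z^2)) m
    _ = Real.sqrt (Real.pi / b) := integral_gaussian b

lemma gaussK_conv {s t : ℝ} (hs : 0 < s) (ht : 0 < t) (u : ℝ) :
    ∫ y, gaussK s 0 y * gaussK t 0 (u - y) = gaussK (s + t) 0 u := by
  have hb : 0 < (s + t) / (2 * s * t) := by positivity
  set b := (s + t) / (2 * s * t) with hbdef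
  set m := s * u / (s + t) with hmdef
  have hst : s + t ≠ 0 := by positivity
  have key : ∀ y, gaussK s 0 y * gaussK t 0 (u - y)
      = gaussK (s + t) 0 u * (Real.exp (-b * (y - m)^2) / Real.sqrt (Real.pi / b)) := by
    intro y
    rw [gaussK_form, gaussK_form, gaussK_form, div_mul_div_comm, div_mul_div_comm]
    congr 1
    · rw [← Real.exp_add, ← Real.exp_add]
      congr 1
      rw [hbdef, hmdef]
      field_simp
      ring
    · rw [← Real.sqrt_mul (by positivity), ← Real.sqrt_mul (by positivity)]
      congr 1
      rw [hbdef]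
      field_simp
  rw [integral_congr_ae (Filter.Eventually.of_forall key), integral_const_mul, integral_div,
    exp_integral_shift hb m, div_self (Real.sqrt_pos.2 (by positivity)).ne', mul_one]

lemma bd_shift {f : ℝ → ℝ} {A B : ℝ} (hB : 0 ≤ B) (hbd : ∀ x, |f x| ≤ A + B * |x|) (a : ℝ) :
    ∀ x, |f (a + x)| ≤ (A + B * |a|) + B * |x| := by
  intro x
  calc |f (a + x)| ≤ A + B * |a + x| := hbd _
    _ ≤ (A + B * |a|) + B * |x| := by
        nlinarith [abs_add_le a x, mul_le_mul_of_nonneg_left (abs_add_le a x) hB]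

lemma heatEvol_comp {t s : ℝ} (ht : 0 < t) (hs : 0 < s) {f : ℝ → ℝ} (hf : Continuous f)
    {A B : ℝ} (hB : 0 ≤ B) (hbd : ∀ x, |f x| ≤ A + B * |x|) (r : ℝ) :
    heatEvol s (heatEvol t f) r = heatEvol (t + s) f r := by
  have hinner : ∀ y, heatEvol t f (r + y) = ∫ x, gaussK t y x * f (r + x) := by
    intro y
    unfold heatEvol
    calc ∫ z, gaussK t (r + y) z * f z
        = ∫ z, (fun w => gaussK t y w * f (w + r)) (z - r) := by
          refine integral_congr_ae (Filter.Eventually.of_forall fun z => ?_)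
          simp only [gaussK_center, sub_add_cancel]
      _ = ∫ x, gaussK t y x * f (x + r) :=
          integral_sub_right_eq_self (μ := volume) (fun w => gaussK t y w * f (w + r)) r
      _ = ∫ x, gaussK t y x * f (r + x) := by
          refine integral_congr_ae (Filter.Eventually.of_forall fun x => ?_)
          simp only [add_comm x r]
  have hcF : Continuous (fun p : ℝ × ℝ => gaussK s 0 p.1 * (gaussK t p.1 p.2 * f (r + p.2))) := by
    refine Continuous.mul ((continuous_gaussK s 0).comp continuous_fst) ?_
    exact (continuous_gaussK2 t).mul (hf.comp (continuous_const.add continuous_snd))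
  have hsecint : ∀ y : ℝ, Integrable (fun x => gaussK s 0 y * (gaussK t y x * f (r + x))) := by
    intro y
    exact (integrable_gaussK_mul ht y (by continuity) hB (bd_shift hB hbd r)).const_mul _
  have hC : 0 ≤ A + B * |r| + B * Real.sqrt t + B ∨ True := Or.inr trivial
  have hnormint : Integrable (fun y => ∫ x, ‖gaussK s 0 y * (gaussK t y x * f (r + x))‖) := by
    have hmeas : AEStronglyMeasurable (fun y => ∫ x, ‖gaussK s 0 y * (gaussK t y x * f (r + x))‖)
        volume := by
      have h1 : StronglyMeasurable
          (fun p : ℝ × ℝ => ‖gaussK s 0 p.1 * (gaussK t p.1 p.2 * f (r + p.2))‖) :=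
        hcF.stronglyMeasurable.norm
      exact h1.integral_prod_right'.aestronglyMeasurable
    have hmajint : Integrable (fun y =>
        gaussK s 0 y * ((A + B * |r| + B * Real.sqrt t) + B * |y|)) := by
      refine integrable_gaussK_mul hs 0 (by continuity) hB
        (A := |A + B * |r| + B * Real.sqrt t|) (fun y => ?_)
      have h := abs_add_le (A + B * |r| + B * Real.sqrt t) (B * |y|)
      rwa [abs_mul, abs_abs, abs_of_nonneg hB] at h
    refine Integrable.mono' hmajint hmeas (Filter.Eventually.of_forall fun y => ?_)
    have hnn : 0 ≤ ∫ x, ‖gaussK s 0 y * (gaussK t y x * f (r + x))‖ :=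
      integral_nonneg fun x => norm_nonneg _
    rw [Real.norm_eq_abs, abs_of_nonneg hnn]
    have h2 : ∀ x, ‖gaussK s 0 y * (gaussK t y x * f (r + x))‖
        = gaussK s 0 y * |gaussK t y x * f (r + x)| := fun x => by
      rw [Real.norm_eq_abs, abs_mul, abs_of_nonneg (gaussK_nonneg s 0 y)]
    rw [integral_congr_ae (Filter.Eventually.of_forall h2), integral_const_mul]
    have h3 : (∫ x, |gaussK t y x * f (r + x)|)
        ≤ (A + B * |r|) + B * |y| + B * Real.sqrt t :=
      integral_abs_gaussK_mul_le ht y (by continuity) hB (bd_shift hB hbd r)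
    calc gaussK s 0 y * (∫ x, |gaussK t y x * f (r + x)|)
        ≤ gaussK s 0 y * ((A + B * |r|) + B * |y| + B * Real.sqrt t) :=
          mul_le_mul_of_nonneg_left h3 (gaussK_nonneg s 0 y)
      _ = gaussK s 0 y * ((A + B * |r| + B * Real.sqrt t) + B * |y|) := by ring
  have hFint : Integrable (Function.uncurry
      (fun y x => gaussK s 0 y * (gaussK t y x * f (r + x)))) (volume.prod volume) := by
    exact (integrable_prod_iff hcF.aestronglyMeasurable).2
      ⟨Filter.Eventually.of_forall hsecint, hnormint⟩
  calc heatEvol s (heatEvol t f) r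
      = ∫ y, gaussK s 0 y * heatEvol t f (r + y) := heatEvol_rep s _ r
    _ = ∫ y, ∫ x, gaussK s 0 y * (gaussK t y x * f (r + x)) := by
        refine integral_congr_ae (Filter.Eventually.of_forall fun y => ?_)
        show gaussK s 0 y * heatEvol t f (r + y) = ∫ x, gaussK s 0 y * (gaussK t y x * f (r + x))
        rw [hinner y, integral_const_mul]
    _ = ∫ x, ∫ y, gaussK s 0 y * (gaussK t y x * f (r + x)) := integral_integral_swap hFint
    _ = ∫ x, gaussK (s + t) 0 x * f (r + x) := by
        refine integral_congr_ae (Filter.Eventually.of_forall fun x => ?_)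
        have h5 : ∀ y, gaussK s 0 y * (gaussK t y x * f (r + x))
            = (gaussK s 0 y * gaussK t 0 (x - y)) * f (r + x) := fun y => by
          rw [gaussK_shift t y x]; ring
        show (∫ y, gaussK s 0 y * (gaussK t y x * f (r + x))) = gaussK (s + t) 0 x * f (r + x)
        rw [integral_congr_ae (Filter.Eventually.of_forall h5), integral_mul_const,
          gaussK_conv hs ht x]
    _ = heatEvol (s + t) f r := (heatEvol_rep (s + t) f r).symm
    _ = heatEvol (t + s) f r := by rw [add_comm]
def Good (f : ℝ → ℝ) : Prop := LipschitzWith 1 f ∧ ∀ x, |x| ≤ f x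

lemma Good.cont {f : ℝ → ℝ} (hf : Good f) : Continuous f := hf.1.continuous

lemma Good.nonneg {f : ℝ → ℝ} (hf : Good f) (x : ℝ) : 0 ≤ f x :=
  (abs_nonneg x).trans (hf.2 x)

lemma Good.bd {f : ℝ → ℝ} (hf : Good f) : ∀ x, |f x| ≤ f 0 + 1 * |x| := by
  intro x
  rw [abs_of_nonneg (hf.nonneg x), one_mul]
  have h := lip_bound hf.1 0 x
  simp only [sub_zero] at h
  have := (abs_le.1 h).2
  linarith

lemma Good.heat {t : ℝ} (ht : 0 < t) {f : ℝ → ℝ} (hf : Good f) : Good (heatEvol t f) := by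
  constructor
  · exact heatEvol_lipschitz ht hf.1 zero_le_one hf.bd
  · intro r
    have h := heatEvol_ge_cone ht hf.cont zero_le_one hf.bd le_rfl
      (fun x => by simpa using hf.2 x) r
    simpa using h

lemma Good.maxCone {f : ℝ → ℝ} (hf : Good f) {c : ℝ} (hc : 0 ≤ c) :
    Good (fun r => max (f r) (|r| + c)) := by
  constructor
  · have h1 : LipschitzWith 1 (fun r : ℝ => |r| + c) := by
      refine LipschitzWith.of_dist_le_mul fun x y => ?_
      rw [Real.dist_eq, Real.dist_eq, NNReal.coe_one, one_mul]
      simp only [add_sub_add_right_eq_sub]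
      exact abs_abs_sub_abs_le_abs_sub x y
    simpa using hf.1.max h1
  · intro x
    exact le_max_of_le_right (by linarith [le_refl |x|])

section Evo

variable {j δ : ℝ} {φ : ℝ → ℝ}

lemma good_deltaMinus (hj : 0 < j) (hδ : 0 < δ) (hφ : Good φ) (k : ℕ) :
    Good (deltaMinus j δ φ k) ∧ ∀ r, |r| + (k : ℝ) * j * δ ≤ deltaMinus j δ φ k r := by
  induction k with
  | zero => exact ⟨hφ, fun r => by simpa [deltaMinus] using hφ.2 r⟩
  | succ k ih =>
    have hc : 0 ≤ ((k : ℝ) + 1) * j * δ := by positivity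
    constructor
    · show Good (fun r => max (heatEvol δ (deltaMinus j δ φ k) r) (|r| + ((k : ℝ) + 1) * j * δ))
      exact (ih.1.heat hδ).maxCone hc
    · intro r
      show |r| + ((k : ℕ) + 1 : ℕ) * j * δ
          ≤ max (heatEvol δ (deltaMinus j δ φ k) r) (|r| + ((k : ℝ) + 1) * j * δ)
      refine le_max_of_le_right ?_
      push_cast
      exact le_rfl

lemma deltaMinus_step_upper (hj : 0 < j) (hδ : 0 < δ) (hφ : Good φ) (k : ℕ) (r : ℝ) :
    deltaMinus j δ φ (k + 1) r ≤ heatEvol δ (deltaMinus j δ φ k) r + j * δ := by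
  have hgood := (good_deltaMinus hj hδ hφ k).1
  have hcone := (good_deltaMinus hj hδ hφ k).2
  show max (heatEvol δ (deltaMinus j δ φ k) r) (|r| + ((k : ℝ) + 1) * j * δ) ≤ _
  apply max_le
  · nlinarith
  · have h := heatEvol_ge_cone hδ hgood.cont zero_le_one hgood.bd
      (c := (k : ℝ) * j * δ) (by positivity) (fun x => hcone x) r
    linarith

end Evo
section Evo2

variable {j δ : ℝ} {φ : ℝ → ℝ}

lemma deltaMinusT_grid (hδ : 0 < δ) (k : ℕ) :
    deltaMinusT j δ φ ((k : ℝ) * δ) = deltaMinus j δ φ k := by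
  have h : ∃ n : ℕ, (k : ℝ) * δ = (n : ℝ) * δ := ⟨k, rfl⟩
  unfold deltaMinusT
  rw [dif_pos h]
  have hc : h.choose = k := by
    have hs := h.choose_spec
    have h2 : (k : ℝ) = (h.choose : ℝ) := mul_right_cancel₀ hδ.ne' hs
    exact_mod_cast h2.symm
  rw [hc]

lemma deltaMinusT_nongrid {t : ℝ} (h : ¬ ∃ k : ℕ, t = (k : ℝ) * δ) :
    deltaMinusT j δ φ t
      = heatEvol (t - ⌊t / δ⌋ * δ) (deltaMinus j δ φ (⌊t / δ⌋).toNat) := by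
  unfold deltaMinusT
  rw [dif_neg h]

lemma floor_cast_eq {t : ℝ} (hδ : 0 < δ) (ht : 0 ≤ t) :
    ((⌊t / δ⌋.toNat : ℕ) : ℝ) = ((⌊t / δ⌋ : ℤ) : ℝ) := by
  have h : (0:ℤ) ≤ ⌊t / δ⌋ := Int.floor_nonneg.2 (div_nonneg ht hδ.le)
  exact_mod_cast congrArg (fun z : ℤ => (z : ℝ)) (Int.toNat_of_nonneg h)

lemma nongrid_pos {t : ℝ} (hδ : 0 < δ) (ht : 0 ≤ t) (h : ¬ ∃ k : ℕ, t = (k : ℝ) * δ) :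
    0 < t - ⌊t / δ⌋ * δ := by
  have h1 : (⌊t / δ⌋ : ℝ) ≤ t / δ := Int.floor_le _
  have h2 : (⌊t / δ⌋ : ℝ) * δ ≤ t := by
    rw [← le_div_iff₀ hδ] at *
    linarith [mul_le_mul_of_nonneg_right h1 hδ.le]
  rcases lt_or_eq_of_le h2 with h3 | h3
  · linarith
  · exfalso
    apply h
    exact ⟨⌊t / δ⌋.toNat, by rw [← floor_cast_eq hδ ht] at h3; exact h3.symm⟩

lemma good_Phi (hj : 0 < j) (hδ : 0 < δ) (hφ : Good φ) {t : ℝ} (ht : 0 ≤ t) :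
    Good (deltaMinusT j δ φ t) := by
  by_cases h : ∃ k : ℕ, t = (k : ℝ) * δ
  · obtain ⟨k, rfl⟩ := h
    rw [deltaMinusT_grid hδ]
    exact (good_deltaMinus hj hδ hφ k).1
  · rw [deltaMinusT_nongrid h]
    exact ((good_deltaMinus hj hδ hφ _).1).heat (nongrid_pos hδ ht h)

/-- One-cell step: from time `t` to the next grid point `u = (⌊t/δ⌋+1)δ`. -/
lemma substep (hj : 0 < j) (hδ : 0 < δ) (hφ : Good φ) {t : ℝ} (ht : 0 ≤ t) (r : ℝ) :
    heatEvol (((⌊t / δ⌋.toNat : ℕ) + 1 : ℕ) * δ - t) (deltaMinusT j δ φ t) r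
      ≤ deltaMinusT j δ φ (((⌊t / δ⌋.toNat : ℕ) + 1 : ℕ) * δ) r ∧
    deltaMinusT j δ φ (((⌊t / δ⌋.toNat : ℕ) + 1 : ℕ) * δ) r
      ≤ heatEvol (((⌊t / δ⌋.toNat : ℕ) + 1 : ℕ) * δ - t) (deltaMinusT j δ φ t) r + j * δ := by
  set m : ℕ := ⌊t / δ⌋.toNat with hm
  have hgood := (good_deltaMinus hj hδ hφ m).1
  have hcone := (good_deltaMinus hj hδ hφ m).2
  have hmr : ((m : ℕ) : ℝ) = ((⌊t / δ⌋ : ℤ) : ℝ) := floor_cast_eq hδ ht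
  have hlt : t < ((m : ℕ) + 1 : ℕ) * δ := by
    have := Int.lt_floor_add_one (t / δ)
    push_cast [hmr]
    rw [← div_lt_iff₀ hδ] at *
    push_cast
    linarith
  -- the evolved profile at u equals heatEvol δ (deltaMinus m)
  have hkey : heatEvol (((m : ℕ) + 1 : ℕ) * δ - t) (deltaMinusT j δ φ t) r
      = heatEvol δ (deltaMinus j δ φ m) r := by
    by_cases h : ∃ k : ℕ, t = (k : ℝ) * δ
    · obtain ⟨k, rfl⟩ := h
      have hk : m = k := by
        have : ⌊((k : ℝ) * δ) / δ⌋ = (k : ℤ) := by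
          rw [mul_div_assoc, div_self hδ.ne', mul_one, Int.floor_natCast]
        simp [hm, this]
      rw [hk, deltaMinusT_grid hδ,
        show ((((k : ℕ) + 1 : ℕ) : ℝ) * δ - (k : ℝ) * δ) = δ by push_cast; ring]
    · rw [deltaMinusT_nongrid h]
      have ha : 0 < t - ⌊t / δ⌋ * δ := nongrid_pos hδ ht h
      have hs' : 0 < ((m : ℕ) + 1 : ℕ) * δ - t := by linarith
      rw [heatEvol_comp ha hs' hgood.cont zero_le_one hgood.bd r]
      congr 1
      push_cast [← hmr]
      ring
  have hu : deltaMinusT j δ φ (((m : ℕ) + 1 : ℕ) * δ) r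
      = max (heatEvol δ (deltaMinus j δ φ m) r) (|r| + ((m : ℝ) + 1) * j * δ) := by
    rw [deltaMinusT_grid hδ (m + 1)]
    rfl
  constructor
  · rw [hkey, hu]; exact le_max_left _ _
  · rw [hkey, hu]
    apply max_le
    · nlinarith
    · have h := heatEvol_ge_cone hδ hgood.cont zero_le_one hgood.bd
        (c := (m : ℝ) * j * δ) (by positivity) (fun x => hcone x) r
      linarith

end Evo2
section Evo3

variable {j δ : ℝ} {φ : ℝ → ℝ}

lemma master (hj : 0 < j) (hδ : 0 < δ) (hφ : Good φ) (n : ℕ) :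
    ∀ t : ℝ, 0 ≤ t → ∀ s : ℝ, 0 < s → (⌊(t + s) / δ⌋ - ⌊t / δ⌋).toNat = n → ∀ r : ℝ,
    heatEvol s (deltaMinusT j δ φ t) r ≤ deltaMinusT j δ φ (t + s) r ∧
    deltaMinusT j δ φ (t + s) r ≤ heatEvol s (deltaMinusT j δ φ t) r + j * δ * n := by
  induction n with
  | zero =>
    intro t ht s hs hn r
    have hmono : ⌊t / δ⌋ ≤ ⌊(t + s) / δ⌋ :=
      Int.floor_mono ((div_le_div_iff_of_pos_right hδ).2 (by linarith))
    have hfl : ⌊(t + s) / δ⌋ = ⌊t / δ⌋ := by omega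
    have hng : ¬ ∃ k : ℕ, t + s = (k : ℝ) * δ := by
      rintro ⟨k, hk⟩
      have h1 : ⌊(t + s) / δ⌋ = (k : ℤ) := by
        rw [hk, mul_div_assoc, div_self hδ.ne', mul_one, Int.floor_natCast]
      have h2 : ((k : ℤ) : ℝ) ≤ t / δ := by
        rw [← h1, hfl]; exact Int.floor_le _
      have h3 : (k : ℝ) * δ ≤ t := by
        rw [← le_div_iff₀ hδ]; exact_mod_cast h2
      linarith
    rw [deltaMinusT_nongrid hng]
    have heq : heatEvol ((t + s) - ⌊(t + s) / δ⌋ * δ) (deltaMinus j δ φ (⌊(t + s) / δ⌋).toNat) r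
        = heatEvol s (deltaMinusT j δ φ t) r := by
      by_cases h : ∃ k : ℕ, t = (k : ℝ) * δ
      · obtain ⟨k, rfl⟩ := h
        have hk1 : ⌊((k : ℝ) * δ) / δ⌋ = (k : ℤ) := by
          rw [mul_div_assoc, div_self hδ.ne', mul_one, Int.floor_natCast]
        rw [deltaMinusT_grid hδ, hfl, hk1]
        norm_num
      · have ha : 0 < t - ⌊t / δ⌋ * δ := nongrid_pos hδ ht h
        rw [deltaMinusT_nongrid h, hfl,
          heatEvol_comp ha hs ((good_deltaMinus hj hδ hφ _).1).cont zero_le_one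
            ((good_deltaMinus hj hδ hφ _).1).bd r]
        congr 1
        ring
    rw [heq]
    exact ⟨le_rfl, by simp⟩
  | succ n IH =>
    intro t ht s hs hn r
    set m : ℕ := ⌊t / δ⌋.toNat with hmdef
    set u : ℝ := (((m : ℕ) + 1 : ℕ) : ℝ) * δ with hudef
    have hmr : ((m : ℕ) : ℝ) = ((⌊t / δ⌋ : ℤ) : ℝ) := floor_cast_eq hδ ht
    have hmz : (m : ℤ) = ⌊t / δ⌋ := by exact_mod_cast hmr
    have hut : t < u := by
      have h1 := Int.lt_floor_add_one (t / δ)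
      have h2 : t / δ < ((m : ℝ) + 1) := by rw [hmr]; exact_mod_cast h1
      have := (div_lt_iff₀ hδ).1 h2
      rw [hudef]; push_cast; linarith
    have hint : ⌊t / δ⌋ + 1 ≤ ⌊(t + s) / δ⌋ := by omega
    have hule : u ≤ t + s := by
      have h2 : ((⌊(t + s) / δ⌋ : ℤ) : ℝ) ≤ (t + s) / δ := Int.floor_le _
      have h3 : ((⌊t / δ⌋ : ℤ) : ℝ) + 1 ≤ ((⌊(t + s) / δ⌋ : ℤ) : ℝ) := by exact_mod_cast hint
      have h4 : ((m : ℝ) + 1) ≤ (t + s) / δ := by rw [hmr]; linarith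
      have := (le_div_iff₀ hδ).1 h4
      rw [hudef]; push_cast; linarith
    have hGt : Good (deltaMinusT j δ φ t) := good_Phi hj hδ hφ ht
    have hsub := substep hj hδ hφ ht
    rcases eq_or_lt_of_le hule with heq | hlt'
    · -- u = t + s
      have hs' : s = u - t := by linarith
      rw [← heq, hs']
      refine ⟨(hsub r).1, (hsub r).2.trans ?_⟩
      have hrfl : heatEvol ((((⌊t / δ⌋.toNat : ℕ) + 1 : ℕ) : ℝ) * δ - t) (deltaMinusT j δ φ t) r
          = heatEvol (u - t) (deltaMinusT j δ φ t) r := rfl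
      rw [hrfl]
      have hn0 : (0 : ℝ) ≤ (n : ℝ) := Nat.cast_nonneg n
      push_cast
      nlinarith [mul_nonneg (mul_nonneg hj.le hδ.le) hn0]
    · -- u < t + s
      have hs'pos : 0 < t + s - u := by linarith
      have hu0 : (0 : ℝ) ≤ u := by rw [hudef]; positivity
      have hcount : (⌊(u + (t + s - u)) / δ⌋ - ⌊u / δ⌋).toNat = n := by
        have h3 : u + (t + s - u) = t + s := by ring
        have h4 : ⌊u / δ⌋ = ((m : ℤ) + 1) := by
          rw [hudef, mul_div_assoc, div_self hδ.ne', mul_one]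
          exact_mod_cast Int.floor_natCast (m + 1)
        rw [h3, h4]
        omega
      have hIH := IH u hu0 (t + s - u) hs'pos hcount r
      have hIHmono := IH u hu0 (t + s - u) hs'pos hcount
      have hGu : Good (deltaMinusT j δ φ u) := good_Phi hj hδ hφ hu0
      have hG1 : Good (heatEvol (u - t) (deltaMinusT j δ φ t)) := hGt.heat (by linarith)
      have hcomp : heatEvol (t + s - u) (heatEvol (u - t) (deltaMinusT j δ φ t)) r
          = heatEvol s (deltaMinusT j δ φ t) r := by
        rw [heatEvol_comp (by linarith : (0:ℝ) < u - t) hs'pos hGt.cont zero_le_one hGt.bd r,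
          show (u - t) + (t + s - u) = s by ring]
      have huts : u + (t + s - u) = t + s := by ring
      rw [huts] at hIH
      constructor
      · calc heatEvol s (deltaMinusT j δ φ t) r
            = heatEvol (t + s - u) (heatEvol (u - t) (deltaMinusT j δ φ t)) r := hcomp.symm
          _ ≤ heatEvol (t + s - u) (deltaMinusT j δ φ u) r :=
              heatEvol_mono hs'pos hG1.cont hGu.cont zero_le_one zero_le_one hG1.bd hGu.bd
                (fun x => (hsub x).1) r
          _ ≤ deltaMinusT j δ φ (t + s) r := hIH.1
      · have hbd2 : ∀ x, |heatEvol (u - t) (deltaMinusT j δ φ t) x + j * δ|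
            ≤ (heatEvol (u - t) (deltaMinusT j δ φ t) 0 + |j * δ|) + 1 * |x| := by
          intro x
          calc |heatEvol (u - t) (deltaMinusT j δ φ t) x + j * δ|
              ≤ |heatEvol (u - t) (deltaMinusT j δ φ t) x| + |j * δ| := abs_add_le _ _
            _ ≤ _ := by linarith [hG1.bd x]
        have hmono2 : heatEvol (t + s - u) (deltaMinusT j δ φ u) r
            ≤ heatEvol (t + s - u)
                (fun x => heatEvol (u - t) (deltaMinusT j δ φ t) x + j * δ) r :=
          heatEvol_mono hs'pos hGu.cont (hG1.cont.add continuous_const) zero_le_one zero_le_one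
            hGu.bd hbd2 (fun x => (hsub x).2) r
        have hconst : heatEvol (t + s - u)
              (fun x => heatEvol (u - t) (deltaMinusT j δ φ t) x + j * δ) r
            = heatEvol (t + s - u) (heatEvol (u - t) (deltaMinusT j δ φ t)) r + j * δ :=
          heatEvol_add_const hs'pos hG1.cont zero_le_one hG1.bd (j * δ) r
        calc deltaMinusT j δ φ (t + s) r
            ≤ heatEvol (t + s - u) (deltaMinusT j δ φ u) r + j * δ * n := hIH.2
          _ ≤ heatEvol (t + s - u)
                (fun x => heatEvol (u - t) (deltaMinusT j δ φ t) x + j * δ) r + j * δ * n := by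
              linarith
          _ = heatEvol s (deltaMinusT j δ φ t) r + j * δ + j * δ * n := by
              rw [hconst, hcomp]
          _ = heatEvol s (deltaMinusT j δ φ t) r + j * δ * ((n : ℝ) + 1) := by ring
          _ = heatEvol s (deltaMinusT j δ φ t) r + j * δ * ((n + 1 : ℕ) : ℝ) := by push_cast; ring

end Evo3

end DMaux

/-- (Time regularity of the lower barrier.) For every `δ > 0`, `t ≥ 0`, `s > 0`:
`G_s φ_t^{δ,−} ≤ φ_{t+s}^{δ,−} ≤ G_s φ_t^{δ,−} + j(s+δ)`; consequently there is a
constant `c > 0`, depending only on the Lipschitz constant and uniform in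
`r`, `t` and `δ ≤ 1`, such that `|φ_{t+s}^{δ,−}(r) − φ_t^{δ,−}(r)| ≤ c√s + j(s+δ)`. -/
theorem delta_minus_time_regularity (j : ℝ) (hj : 0 < j)
    (φ : ℝ → ℝ) (hlip : LipschitzWith 1 φ) (hge : ∀ r : ℝ, |r| ≤ φ r)
    (hcone : ∃ M : ℝ, ∀ r : ℝ, M ≤ |r| → φ r = |r|) :
    (∀ δ : ℝ, 0 < δ → ∀ t : ℝ, 0 ≤ t → ∀ s : ℝ, 0 < s → ∀ r : ℝ,
      heatEvol s (deltaMinusT j δ φ t) r ≤ deltaMinusT j δ φ (t + s) r ∧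
      deltaMinusT j δ φ (t + s) r
        ≤ heatEvol s (deltaMinusT j δ φ t) r + j * (s + δ)) ∧
    (∃ c : ℝ, 0 < c ∧ ∀ δ : ℝ, 0 < δ → δ ≤ 1 →
      ∀ t : ℝ, 0 ≤ t → ∀ s : ℝ, 0 < s → ∀ r : ℝ,
        |deltaMinusT j δ φ (t + s) r - deltaMinusT j δ φ t r|
          ≤ c * Real.sqrt s + j * (s + δ)) := by
  have hφ : DMaux.Good φ := ⟨hlip, hge⟩
  have part1 : ∀ δ : ℝ, 0 < δ → ∀ t : ℝ, 0 ≤ t → ∀ s : ℝ, 0 < s → ∀ r : ℝ,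
      heatEvol s (deltaMinusT j δ φ t) r ≤ deltaMinusT j δ φ (t + s) r ∧
      deltaMinusT j δ φ (t + s) r ≤ heatEvol s (deltaMinusT j δ φ t) r + j * (s + δ) := by
    intro δ hδ t ht s hs r
    obtain ⟨h1, h2⟩ := DMaux.master hj hδ hφ _ t ht s hs rfl r
    refine ⟨h1, h2.trans ?_⟩
    have hmono : ⌊t / δ⌋ ≤ ⌊(t + s) / δ⌋ :=
      Int.floor_mono ((div_le_div_iff_of_pos_right hδ).2 (by linarith))
    set n : ℕ := (⌊(t + s) / δ⌋ - ⌊t / δ⌋).toNat with hndef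
    have hz : ((n : ℤ) : ℝ) = ((⌊(t + s) / δ⌋ - ⌊t / δ⌋ : ℤ) : ℝ) := by
      exact_mod_cast congrArg (fun z : ℤ => (z : ℝ)) (Int.toNat_of_nonneg (by omega))
    have hcast : ((n : ℕ) : ℝ) = ((⌊(t + s) / δ⌋ : ℤ) : ℝ) - ((⌊t / δ⌋ : ℤ) : ℝ) := by
      push_cast at hz ⊢
      linarith
    have hf1 : ((⌊(t + s) / δ⌋ : ℤ) : ℝ) ≤ (t + s) / δ := Int.floor_le _
    have hf2 : t / δ - 1 < ((⌊t / δ⌋ : ℤ) : ℝ) := Int.sub_one_lt_floor _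
    have hsd : (t + s) / δ - t / δ = s / δ := by field_simp; ring
    have hn : (n : ℝ) ≤ s / δ + 1 := by rw [hcast]; linarith
    have hδn : δ * (n : ℝ) ≤ s + δ := by
      have h := mul_le_mul_of_nonneg_left hn hδ.le
      rw [show δ * (s / δ + 1) = s + δ by field_simp] at h
      exact h
    have := mul_le_mul_of_nonneg_left hδn hj.le
    nlinarith
  refine ⟨part1, 1, one_pos, ?_⟩
  intro δ hδ _ t ht s hs r
  obtain ⟨h1, h2⟩ := part1 δ hδ t ht s hs r
  have hG := DMaux.good_Phi hj hδ hφ ht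
  have hmod := DMaux.heatEvol_sub_self hs hG.1 zero_le_one hG.bd r
  have hmodle := abs_le.1 hmod
  have hjs : 0 ≤ j * (s + δ) := by positivity
  have hsq : 0 ≤ Real.sqrt s := Real.sqrt_nonneg s
  rw [abs_le]
  constructor
  · rw [one_mul] at *
    linarith [hmodle.1]
  · rw [one_mul] at *
    linarith [hmodle.2]
end
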